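/- For all real numbers a > 0 and b ≥ 0, the limit as k → ∞ of the product ∏_{i=1}^{k} ((a+6i−4)(a+3b+6i−2)) / ((a+6i−2)(a+3b+6i−4)) exists and equals Γ(a/6+2/3)Γ(a/6+b/2+1/3) / (Γ(a/6+1/3)Γ(a/6+b/2+2/3)), where Γ is the Gamma function. -/

import Mathlib

open Filter Finset

private noncomputable def Pr (x : ℝ) (k : ℕ) : ℝ := ∏ j ∈ Finset.range k, (x + j)

private lemma Pr_pos {x : ℝ} (hx : 0 < x) (k : ℕ) : 0 < Pr x k := by
  apply Finset.prod_pos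
  intro j _
  positivity

theorem stmt1 (a b : ℝ) (ha : 0 < a) (hb : 0 ≤ b) :
    Tendsto
      (fun k : ℕ => ∏ i ∈ Finset.Icc 1 k,
        ((a + 6 * i - 4) * (a + 3 * b + 6 * i - 2)) /
          ((a + 6 * i - 2) * (a + 3 * b + 6 * i - 4)))
      atTop
      (nhds (Real.Gamma (a / 6 + 2 / 3) * Real.Gamma (a / 6 + b / 2 + 1 / 3) /
        (Real.Gamma (a / 6 + 1 / 3) * Real.Gamma (a / 6 + b / 2 + 2 / 3)))) := by
  set x1 : ℝ := a / 6 + 1 / 3 with hx1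
  set x2 : ℝ := a / 6 + 2 / 3 with hx2
  set x3 : ℝ := a / 6 + b / 2 + 1 / 3 with hx3
  set x4 : ℝ := a / 6 + b / 2 + 2 / 3 with hx4
  have hx1p : 0 < x1 := by rw [hx1]; linarith
  have hx2p : 0 < x2 := by rw [hx2]; linarith
  have hx3p : 0 < x3 := by rw [hx3]; linarith
  have hx4p : 0 < x4 := by rw [hx4]; linarith
  have hsum : x1 + x4 = x2 + x3 := by rw [hx1, hx2, hx3, hx4]; ring

  -- Step 1: rewrite the product as a ratio of Pr's
  have hprod : ∀ k : ℕ, (∏ i ∈ Finset.Icc 1 k,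
        ((a + 6 * i - 4) * (a + 3 * b + 6 * i - 2)) /
          ((a + 6 * i - 2) * (a + 3 * b + 6 * i - 4)))
      = (Pr x1 k * Pr x4 k) / (Pr x2 k * Pr x3 k) := by
    intro k
    rw [← Finset.Ico_add_one_right_eq_Icc, Finset.prod_Ico_eq_prod_range]
    have : k + 1 - 1 = k := rfl
    rw [this]
    rw [Pr, Pr, Pr, Pr, ← Finset.prod_mul_distrib, ← Finset.prod_mul_distrib,
      ← Finset.prod_div_distrib]
    apply Finset.prod_congr rfl
    intro j _
    have hj : (0:ℝ) ≤ (j:ℝ) := j.cast_nonneg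
    push_cast
    rw [hx1, hx2, hx3, hx4]
    rw [div_eq_div_iff (ne_of_gt (mul_pos (by linarith) (by linarith)))
      (ne_of_gt (mul_pos (by linarith) (by linarith)))]
    ring
  -- Step 2: relate to GammaSeq
  have key : ∀ k : ℕ, 1 ≤ k →
      (Pr x1 (k+1) * Pr x4 (k+1)) / (Pr x2 (k+1) * Pr x3 (k+1))
        = (Real.GammaSeq x2 k * Real.GammaSeq x3 k) /
          (Real.GammaSeq x1 k * Real.GammaSeq x4 k) := by
    intro k hk
    have hkp : (0 : ℝ) < k := by exact_mod_cast hk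
    have hG : ∀ x : ℝ, Real.GammaSeq x k = (k : ℝ) ^ x * (k.factorial : ℝ) / Pr x (k+1) := by
      intro x
      simp [Real.GammaSeq, Pr]
    have hpow : (k : ℝ) ^ x1 * (k : ℝ) ^ x4 = (k : ℝ) ^ x2 * (k : ℝ) ^ x3 := by
      rw [← Real.rpow_add hkp, ← Real.rpow_add hkp, hsum]
    have hfac : (0 : ℝ) < (k.factorial : ℝ) := by exact_mod_cast Nat.factorial_pos k
    have h1 := Pr_pos hx1p (k+1)
    have h2 := Pr_pos hx2p (k+1)
    have h3 := Pr_pos hx3p (k+1)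
    have h4 := Pr_pos hx4p (k+1)
    have hpw : ∀ x : ℝ, (0:ℝ) < (k:ℝ) ^ x := fun x => Real.rpow_pos_of_pos hkp x
    rw [hG, hG, hG, hG]
    clear_value x1 x2 x3 x4
    field_simp
    linear_combination hpow
  have hG1 : 0 < Real.Gamma x1 := Real.Gamma_pos_of_pos hx1p
  have hG4 : 0 < Real.Gamma x4 := Real.Gamma_pos_of_pos hx4p
  have hlim : Tendsto (fun k : ℕ => (Real.GammaSeq x2 k * Real.GammaSeq x3 k) /
      (Real.GammaSeq x1 k * Real.GammaSeq x4 k)) atTop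
      (nhds (Real.Gamma x2 * Real.Gamma x3 / (Real.Gamma x1 * Real.Gamma x4))) :=
    ((Real.GammaSeq_tendsto_Gamma x2).mul (Real.GammaSeq_tendsto_Gamma x3)).div
      ((Real.GammaSeq_tendsto_Gamma x1).mul (Real.GammaSeq_tendsto_Gamma x4))
      (ne_of_gt (mul_pos hG1 hG4))
  have h2 : Tendsto (fun k : ℕ => (Pr x1 (k+1) * Pr x4 (k+1)) / (Pr x2 (k+1) * Pr x3 (k+1)))
      atTop (nhds (Real.Gamma x2 * Real.Gamma x3 / (Real.Gamma x1 * Real.Gamma x4))) := by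
    apply hlim.congr'
    filter_upwards [eventually_ge_atTop 1] with k hk
    exact (key k hk).symm
  simp only [hprod]
  rw [← tendsto_add_atTop_iff_nat 1]
  exact h2
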